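/- (Corollary 2, upper bound: MIM-weighted coding theorem for i.i.d. sequence sources.) Let D ≥ 2 be an integer, let p : Fin N → ℝ with p i > 0 and ∑ i, p i = 1, let ω ∈ ℝ, and let n ≥ 1. Define MIM(X;ω) = ∑ j, p j * exp (ω * (1 - p j)) and MIM_N(i;ω) = p i * exp (ω * (1 - p i)) / MIM(X;ω). For sequences x : Fin n → Fin N set q(x) = ∏ k, MIM_N(x k; ω). Then there exists a length assignment l : (Fin n → Fin N) → ℕ satisfying Kraft's inequality ∑_x (D : ℝ)^(-(l x : ℝ)) ≤ 1 such that (1/n) * ∑_x q(x) * (l x : ℝ) < H_MIM(X;ω) + 1/n, where H_MIM(X;ω) = -∑ i, MIM_N(i;ω) * log_D (MIM_N(i;ω)). -/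

import Mathlib

open Finset in
/-- Key combinatorial identity: expectation of an additive functional under a product
distribution equals `n` times the single-letter expectation. -/
lemma mim_aux_sum_prod (n N : ℕ) (q f : Fin N → ℝ) (hq : ∑ i, q i = 1) :
    ∑ x : Fin n → Fin N, (∏ k, q (x k)) * (∑ k, f (x k)) = n * ∑ i, q i * f i := by
  have h1 : ∀ k : Fin n, ∑ x : Fin n → Fin N, (∏ j, q (x j)) * f (x k) = ∑ i, q i * f i := by
    intro k
    set g : Fin n → Fin N → ℝ :=
      Function.update (fun _ : Fin n => q) k (fun i => q i * f i) with hg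
    have hgx : ∀ x : Fin n → Fin N, ∏ j, g j (x j) = (∏ j, q (x j)) * f (x k) := by
      intro x
      have hfun : (fun j => g j (x j)) =
          Function.update (fun j => q (x j)) k (q (x k) * f (x k)) := by
        funext j
        by_cases h : j = k
        · subst h; simp [hg]
        · simp [hg, Function.update_of_ne h]
      calc ∏ j, g j (x j) = ∏ j, Function.update (fun j => q (x j)) k (q (x k) * f (x k)) j := by
            rw [hfun]
        _ = q (x k) * f (x k) * ∏ j ∈ univ.erase k, q (x j) := by
            rw [Finset.prod_update_of_mem (Finset.mem_univ k)]
            simp [Finset.sdiff_singleton_eq_erase]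
        _ = (∏ j, q (x j)) * f (x k) := by
            rw [← Finset.mul_prod_erase univ (fun j => q (x j)) (Finset.mem_univ k)]
            ring
    have hswap : ∑ x : Fin n → Fin N, ∏ j, g j (x j) = ∏ j, ∑ i, g j i :=
      (Fintype.prod_sum (f := g)).symm
    have hprod : ∏ j, ∑ i, g j i = ∑ i, q i * f i := by
      have hfun2 : (fun j => ∑ i, g j i) =
          Function.update (fun _ : Fin n => (1 : ℝ)) k (∑ i, q i * f i) := by
        funext j
        by_cases h : j = k
        · subst h; simp [hg]
        · simp [hg, Function.update_of_ne h, hq]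
      calc ∏ j, ∑ i, g j i
          = ∏ j, Function.update (fun _ : Fin n => (1 : ℝ)) k (∑ i, q i * f i) j := by
            rw [hfun2]
        _ = ∑ i, q i * f i := by
            rw [Finset.prod_update_of_mem (Finset.mem_univ k)]
            simp
    calc ∑ x : Fin n → Fin N, (∏ j, q (x j)) * f (x k)
        = ∑ x : Fin n → Fin N, ∏ j, g j (x j) := by
          exact Finset.sum_congr rfl fun x _ => (hgx x).symm
      _ = ∑ i, q i * f i := by rw [hswap, hprod]
  calc ∑ x : Fin n → Fin N, (∏ k, q (x k)) * (∑ k, f (x k))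
      = ∑ x : Fin n → Fin N, ∑ k, (∏ j, q (x j)) * f (x k) := by
        exact Finset.sum_congr rfl fun x _ => Finset.mul_sum _ _ _
    _ = ∑ k : Fin n, ∑ x : Fin n → Fin N, (∏ j, q (x j)) * f (x k) := Finset.sum_comm
    _ = ∑ _k : Fin n, ∑ i, q i * f i := Finset.sum_congr rfl fun k _ => h1 k
    _ = n * ∑ i, q i * f i := by simp [mul_comm]

/-- Corollary 2, upper bound: MIM-weighted coding theorem for i.i.d. sequence sources. -/
theorem mim_coding_sequence_upper
    (N D n : ℕ) (hD : 2 ≤ D) (hn : 1 ≤ n)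
    (p : Fin N → ℝ)
    (hp : ∀ i, 0 < p i) (hpsum : ∑ i, p i = 1)
    (ω : ℝ) :
    ∃ l : (Fin n → Fin N) → ℕ,
      (∑ x : Fin n → Fin N, (D : ℝ) ^ (-(l x : ℝ)) ≤ 1) ∧
      (1 / (n : ℝ)) *
          ∑ x : Fin n → Fin N,
            (∏ k, p (x k) * Real.exp (ω * (1 - p (x k))) /
                ∑ j, p j * Real.exp (ω * (1 - p j))) * (l x : ℝ) <
        (-∑ i, (p i * Real.exp (ω * (1 - p i)) /
              ∑ j, p j * Real.exp (ω * (1 - p j))) *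
            (Real.log (p i * Real.exp (ω * (1 - p i)) /
                ∑ j, p j * Real.exp (ω * (1 - p j))) / Real.log D)) +
        1 / (n : ℝ) := by
  classical
  have hN : 0 < N := by
    rcases Nat.eq_zero_or_pos N with h | h
    · subst h; simp at hpsum
    · exact h
  have hD1 : (1 : ℝ) < D := by exact_mod_cast Nat.lt_of_lt_of_le one_lt_two hD
  have hDpos : (0 : ℝ) < D := lt_trans one_pos hD1
  set S : ℝ := ∑ j, p j * Real.exp (ω * (1 - p j)) with hS
  have hSpos : 0 < S := by
    apply Finset.sum_pos (fun i _ => mul_pos (hp i) (Real.exp_pos _))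
    exact Finset.univ_nonempty_iff.mpr ⟨⟨0, hN⟩⟩
  set q : Fin N → ℝ := fun i => p i * Real.exp (ω * (1 - p i)) / S with hqdef
  have hqpos : ∀ i, 0 < q i := fun i => by
    have := hp i; simp only [hqdef]; positivity
  have hqsum : ∑ i, q i = 1 := by
    simp only [hqdef, ← Finset.sum_div]
    rw [← hS, div_self hSpos.ne']
  have hq1 : ∀ i, q i ≤ 1 := by
    intro i
    calc q i ≤ ∑ j, q j :=
          Finset.single_le_sum (fun j _ => (hqpos j).le) (Finset.mem_univ i)
      _ = 1 := hqsum
  set Q : (Fin n → Fin N) → ℝ := fun x => ∏ k, q (x k) with hQdef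
  have hQpos : ∀ x, 0 < Q x := fun x => Finset.prod_pos fun k _ => hqpos (x k)
  have hQle1 : ∀ x, Q x ≤ 1 := fun x =>
    Finset.prod_le_one (fun k _ => (hqpos (x k)).le) (fun k _ => hq1 (x k))
  have hQsum : ∑ x : Fin n → Fin N, Q x = 1 := by
    have := (Fintype.prod_sum (ι := Fin n) (f := fun (_ : Fin n) (i : Fin N) => q i)).symm
    rw [this, hqsum]; simp
  set l : (Fin n → Fin N) → ℕ := fun x => ⌈-Real.logb D (Q x)⌉₊ with hldef
  have hlognn : ∀ x, 0 ≤ -Real.logb D (Q x) := fun x => by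
    have := Real.logb_nonpos hD1 (hQpos x).le (hQle1 x); linarith
  refine ⟨l, ?_, ?_⟩
  · -- Kraft
    calc ∑ x : Fin n → Fin N, (D : ℝ) ^ (-(l x : ℝ))
        ≤ ∑ x : Fin n → Fin N, Q x := by
          apply Finset.sum_le_sum
          intro x _
          have h1 : -Real.logb D (Q x) ≤ (l x : ℝ) := Nat.le_ceil _
          calc (D : ℝ) ^ (-(l x : ℝ)) ≤ (D : ℝ) ^ (Real.logb D (Q x)) :=
                Real.rpow_le_rpow_of_exponent_le hD1.le (by linarith)
            _ = Q x := Real.rpow_logb hDpos (ne_of_gt hD1) (hQpos x)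
      _ = 1 := hQsum
  · -- expected length
    have hne : (Finset.univ : Finset (Fin n → Fin N)).Nonempty := by
      have : Nonempty (Fin n → Fin N) := ⟨fun _ => ⟨0, hN⟩⟩
      exact Finset.univ_nonempty
    have hnpos : (0 : ℝ) < n := by exact_mod_cast hn
    set H : ℝ := -∑ i, q i * (Real.log (q i) / Real.log D) with hH
    have hHlogb : H = ∑ i, q i * (-Real.logb D (q i)) := by
      rw [hH, ← Finset.sum_neg_distrib]
      exact Finset.sum_congr rfl fun i _ => by rw [Real.log_div_log]; ring
    have hlogQ : ∀ x, -Real.logb D (Q x) = ∑ k, -Real.logb D (q (x k)) := by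
      intro x
      have : Real.log (Q x) = ∑ k, Real.log (q (x k)) :=
        Real.log_prod fun k _ => (hqpos (x k)).ne'
      simp only [Real.logb, this, Finset.sum_div, ← Finset.sum_neg_distrib]
    have hkey : ∑ x : Fin n → Fin N, Q x * (-Real.logb D (Q x)) = n * H := by
      rw [hHlogb]
      calc ∑ x : Fin n → Fin N, Q x * (-Real.logb D (Q x))
          = ∑ x : Fin n → Fin N, (∏ k, q (x k)) * (∑ k, (fun i => -Real.logb D (q i)) (x k)) := by
            exact Finset.sum_congr rfl fun x _ => by rw [hlogQ x]
        _ = n * ∑ i, q i * (-Real.logb D (q i)) :=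
            mim_aux_sum_prod n N q (fun i => -Real.logb D (q i)) hqsum
    have hstrict : ∑ x : Fin n → Fin N, Q x * (l x : ℝ) <
        ∑ x : Fin n → Fin N, Q x * (-Real.logb D (Q x) + 1) := by
      apply Finset.sum_lt_sum_of_nonempty hne
      intro x _
      have hceil : (l x : ℝ) < -Real.logb D (Q x) + 1 := Nat.ceil_lt_add_one (hlognn x)
      exact mul_lt_mul_of_pos_left hceil (hQpos x)
    have hsum2 : ∑ x : Fin n → Fin N, Q x * (-Real.logb D (Q x) + 1) = n * H + 1 := by
      have : ∀ x : Fin n → Fin N, Q x * (-Real.logb D (Q x) + 1)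
          = Q x * (-Real.logb D (Q x)) + Q x := fun x => by ring
      rw [Finset.sum_congr rfl fun x _ => this x, Finset.sum_add_distrib, hkey, hQsum]
    have hmain : ∑ x : Fin n → Fin N, Q x * (l x : ℝ) < n * H + 1 := by
      rw [← hsum2]; exact hstrict
    have hgoal : (1 / (n : ℝ)) * ∑ x : Fin n → Fin N, Q x * (l x : ℝ) < H + 1 / n := by
      rw [div_mul_eq_mul_div, one_mul, div_lt_iff₀ hnpos]
      calc ∑ x : Fin n → Fin N, Q x * (l x : ℝ) < n * H + 1 := hmain
        _ = (H + 1 / n) * n := by field_simp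
    exact hgoal
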